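/- Let (Ω, 𝓕, μ) be a probability space equipped with a filtration 𝓕_0 ⊆ 𝓕_1 ⊆ … ⊆ 𝓕_n ⊆ 𝓕. For t = 1, …, n let g_t : Ω → ℝ be 𝓕_t-measurable with |g_t| ≤ 1 almost surely and E[g_t | 𝓕_{t−1}] = 0 almost surely, and let w_t : Ω → {0,1} be 𝓕_{t−1}-measurable. Then for every α > 0 and every integer i ≥ 1, μ({ Σ_{t=1}^n w_t = i } ∩ { |Σ_{t=1}^n w_t g_t| > α i }) ≤ 2 exp(−i α² / 2). -/

import Mathlib

open MeasureTheory Finset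

/-- Convexity bound: `exp (a*x) ≤ cosh a + sinh a * x` for `|x| ≤ 1`. -/
lemma exp_mul_le_cosh_add_sinh_mul (a : ℝ) {x : ℝ} (hx : |x| ≤ 1) :
    Real.exp (a * x) ≤ Real.cosh a + Real.sinh a * x := by
  obtain ⟨hx1, hx2⟩ := abs_le.1 hx
  have h1 : (0:ℝ) ≤ (1 - x) / 2 := by linarith
  have h2 : (0:ℝ) ≤ (1 + x) / 2 := by linarith
  have hsum : (1 - x) / 2 + (1 + x) / 2 = 1 := by ring
  have hcx := convexOn_exp.2 (Set.mem_univ (-a)) (Set.mem_univ a) h1 h2 hsum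
  simp only [smul_eq_mul] at hcx
  have harg : (1 - x) / 2 * (-a) + (1 + x) / 2 * a = a * x := by ring
  rw [harg] at hcx
  calc Real.exp (a * x) ≤ (1 - x) / 2 * Real.exp (-a) + (1 + x) / 2 * Real.exp a := hcx
    _ = Real.cosh a + Real.sinh a * x := by rw [Real.cosh_eq, Real.sinh_eq]; ring

/-- Pointwise single-step bound. -/
lemma step_ineq (a : ℝ) {W x : ℝ} (hW : W = 0 ∨ W = 1) (hx : |x| ≤ 1) :
    Real.exp (a * (W * x) - a ^ 2 / 2 * W) ≤
      (1 - W + W * (Real.exp (-(a ^ 2 / 2)) * Real.cosh a)) +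
        W * (Real.exp (-(a ^ 2 / 2)) * Real.sinh a) * x := by
  rcases hW with h | h
  · simp [h]
  · subst h
    have : a * (1 * x) - a ^ 2 / 2 * 1 = -(a ^ 2 / 2) + a * x := by ring
    rw [this, Real.exp_add]
    have hexp := exp_mul_le_cosh_add_sinh_mul a hx
    have hpos : (0:ℝ) < Real.exp (-(a ^ 2 / 2)) := Real.exp_pos _
    nlinarith [hpos]

lemma coeff_le_one (a : ℝ) : Real.exp (-(a ^ 2 / 2)) * Real.cosh a ≤ 1 := by
  have h := Real.cosh_le_exp_half_sq a
  have hpos : (0:ℝ) < Real.exp (-(a ^ 2 / 2)) := Real.exp_pos _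
  calc Real.exp (-(a ^ 2 / 2)) * Real.cosh a
      ≤ Real.exp (-(a ^ 2 / 2)) * Real.exp (a ^ 2 / 2) := by
        exact mul_le_mul_of_nonneg_left h hpos.le
    _ = 1 := by rw [← Real.exp_add]; simp

/-- One-sided weighted Azuma bound. -/
lemma one_side
    {Ω : Type*} [m0 : MeasurableSpace Ω] (μ : Measure Ω) [IsProbabilityMeasure μ]
    (ℱ : Filtration ℕ m0) (n : ℕ) (g w : ℕ → Ω → ℝ)
    (hgmeas : ∀ t ∈ Icc 1 n, Measurable[ℱ t] (g t))
    (hgbdd : ∀ t ∈ Icc 1 n, ∀ᵐ ω ∂μ, |g t ω| ≤ 1)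
    (hgmart : ∀ t ∈ Icc 1 n, μ[g t|ℱ (t - 1)] =ᵐ[μ] 0)
    (hw01 : ∀ t ∈ Icc 1 n, ∀ ω, w t ω = 0 ∨ w t ω = 1)
    (hwmeas : ∀ t ∈ Icc 1 n, Measurable[ℱ (t - 1)] (w t))
    (α : ℝ) (hα : 0 < α) (i : ℕ) :
    μ ({ω | ∑ t ∈ Icc 1 n, w t ω = (i : ℝ)} ∩
       {ω | α * (i : ℝ) < ∑ t ∈ Icc 1 n, w t ω * g t ω}) ≤
      ENNReal.ofReal (Real.exp (-(i : ℝ) * α ^ 2 / 2)) := by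
  classical
  set c : ℝ := α ^ 2 / 2 with hc
  set f : ℕ → Ω → ℝ := fun t ω => α * (w t ω * g t ω) - c * w t ω with hf
  set S : ℕ → Ω → ℝ := fun m ω => ∑ t ∈ Icc 1 m, f t ω with hS
  -- a.e. event that all the g's are bounded
  have hbdd : ∀ᵐ ω ∂μ, ∀ t, t ∈ Icc 1 n → |g t ω| ≤ 1 := by
    rw [ae_all_iff]
    intro t
    by_cases ht : t ∈ Icc 1 n
    · filter_upwards [hgbdd t ht] with ω hω _; exact hω
    · filter_upwards with ω h; exact absurd h ht
  -- measurability of S m w.r.t. ℱ m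
  have hSmeas : ∀ m, m ≤ n → Measurable[ℱ m] (S m) := by
    intro m hm
    apply Finset.measurable_sum
    intro t ht
    have ht' : t ∈ Icc 1 n := by
      simp only [mem_Icc] at ht ⊢; omega
    have htm : t ≤ m := (mem_Icc.1 ht).2
    have hwm : Measurable[ℱ m] (w t) :=
      (hwmeas t ht').mono (ℱ.mono (by omega : t - 1 ≤ m)) le_rfl
    have hgm : Measurable[ℱ m] (g t) :=
      (hgmeas t ht').mono (ℱ.mono htm) le_rfl
    exact ((measurable_const.mul (hwm.mul hgm)).sub (measurable_const.mul hwm))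
  have hSmeas0 : ∀ m, m ≤ n → Measurable (S m) :=
    fun m hm => (hSmeas m hm).mono (ℱ.le m) le_rfl
  -- a.e. bound on exp (S m)
  have hEbd : ∀ m, m ≤ n → ∀ᵐ ω ∂μ, ‖Real.exp (S m ω)‖ ≤ Real.exp (α * m) := by
    intro m hm
    filter_upwards [hbdd] with ω hω
    rw [Real.norm_eq_abs, abs_of_pos (Real.exp_pos _), Real.exp_le_exp]
    have : ∀ t ∈ Icc 1 m, f t ω ≤ α := by
      intro t ht
      have ht' : t ∈ Icc 1 n := by simp only [mem_Icc] at ht ⊢; omega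
      rcases hw01 t ht' ω with h0 | h1
      · simp only [hf, h0]; simpa using hα.le
      · have hg1 := hω t ht'
        have : α * g t ω ≤ α := by
          calc α * g t ω ≤ α * 1 := by
                exact mul_le_mul_of_nonneg_left (le_of_abs_le hg1) hα.le
            _ = α := mul_one α
        simp only [hf, h1, mul_one]
        have hc0 : (0:ℝ) ≤ c := by positivity
        linarith
    calc S m ω ≤ ∑ _t ∈ Icc 1 m, α := Finset.sum_le_sum this
      _ = m * α := by simp [Nat.card_Icc]
      _ = α * m := mul_comm _ _
  have hEint : ∀ m, m ≤ n → Integrable (fun ω => Real.exp (S m ω)) μ := by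
    intro m hm
    exact (integrable_const (Real.exp (α * m))).mono'
      ((Real.measurable_exp.comp (hSmeas0 m hm)).aestronglyMeasurable) (hEbd m hm)
  -- the key supermartingale inequality
  have hkey : ∀ m, m ≤ n → ∫ ω, Real.exp (S m ω) ∂μ ≤ 1 := by
    intro m
    induction m with
    | zero =>
      intro _
      simp [hS]
    | succ m ih =>
      intro hm1
      have hm : m ≤ n := by omega
      have hmem : m + 1 ∈ Icc 1 n := mem_Icc.2 ⟨by omega, hm1⟩
      set K : ℝ := Real.exp (-c) * Real.cosh α with hK
      set L : ℝ := Real.exp (-c) * Real.sinh α with hL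
      set A : Ω → ℝ := fun ω => 1 - w (m + 1) ω + w (m + 1) ω * K with hA
      set X : Ω → ℝ := fun ω => Real.exp (S m ω) * w (m + 1) ω with hX
      -- measurability facts in m0
      have hwm0 : Measurable (w (m + 1)) :=
        (hwmeas (m + 1) hmem).mono (ℱ.le _) le_rfl
      have hgm0 : Measurable (g (m + 1)) :=
        (hgmeas (m + 1) hmem).mono (ℱ.le _) le_rfl
      have hEm0 : Measurable fun ω => Real.exp (S m ω) :=
        Real.measurable_exp.comp (hSmeas0 m hm)
      have hw01' : ∀ ω, w (m + 1) ω = 0 ∨ w (m + 1) ω = 1 := hw01 (m + 1) hmem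
      have hwabs : ∀ ω, |w (m + 1) ω| ≤ 1 := by
        intro ω; rcases hw01' ω with h | h <;> simp [h]
      have hAbd : ∀ ω, |A ω| ≤ 1 ∧ A ω ≤ 1 := by
        intro ω
        rcases hw01' ω with h | h
        · simp [hA, h]
        · have hK1 : K ≤ 1 := coeff_le_one α
          have hK0 : 0 ≤ K := by positivity
          constructor
          · simp only [hA, h]; rw [abs_le]; constructor <;> [linarith; linarith]
          · simp only [hA, h]; linarith
      -- integrabilities
      have hintEA : Integrable (fun ω => Real.exp (S m ω) * A ω) μ := by
        refine (integrable_const (Real.exp (α * m))).mono'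
          ((hEm0.mul ((measurable_const.sub hwm0).add (hwm0.mul measurable_const))).aestronglyMeasurable)
          ?_
        filter_upwards [hEbd m hm] with ω hω
        rw [Real.norm_eq_abs, abs_mul]
        calc |Real.exp (S m ω)| * |A ω| ≤ Real.exp (α * m) * 1 := by
              exact mul_le_mul (by simpa [Real.norm_eq_abs] using hω) (hAbd ω).1
                (abs_nonneg _) (Real.exp_pos _).le
          _ = Real.exp (α * m) := mul_one _
      have hintXg : Integrable (fun ω => X ω * g (m + 1) ω) μ := by
        refine (integrable_const (Real.exp (α * m))).mono'
          (((hEm0.mul hwm0).mul hgm0).aestronglyMeasurable) ?_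
        filter_upwards [hEbd m hm, hgbdd (m + 1) hmem] with ω hω hg1
        rw [Real.norm_eq_abs, abs_mul, hX]
        simp only [abs_mul]
        calc |Real.exp (S m ω)| * |w (m + 1) ω| * |g (m + 1) ω|
            ≤ Real.exp (α * m) * 1 * 1 := by
              refine mul_le_mul (mul_le_mul ?_ (hwabs ω) (abs_nonneg _) (Real.exp_pos _).le)
                hg1 (abs_nonneg _) ?_
              · simpa [Real.norm_eq_abs] using hω
              · positivity
          _ = Real.exp (α * m) := by ring
      have hintg : Integrable (g (m + 1)) μ := by
        refine (integrable_const (1 : ℝ)).mono' hgm0.aestronglyMeasurable ?_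
        filter_upwards [hgbdd (m + 1) hmem] with ω hω
        simpa [Real.norm_eq_abs] using hω
      -- the conditional expectation argument: ∫ X * g = 0
      have hXg0 : ∫ ω, X ω * g (m + 1) ω ∂μ = 0 := by
        have hle : ℱ m ≤ m0 := ℱ.le m
        have hXsm : StronglyMeasurable[ℱ m] X := by
          have hwm : Measurable[ℱ m] (w (m + 1)) := by
            have := hwmeas (m + 1) hmem
            simpa using this
          exact ((Real.measurable_exp.comp (hSmeas m hm)).mul hwm).stronglyMeasurable
        have hmart : μ[g (m + 1)|ℱ m] =ᵐ[μ] 0 := by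
          have := hgmart (m + 1) hmem
          simpa using this
        have hintXg' : Integrable (X * g (m + 1)) μ := hintXg
        have h1 := condExp_mul_of_stronglyMeasurable_left hXsm hintXg' hintg
        have h2 : (X * μ[g (m + 1)|ℱ m] : Ω → ℝ) =ᵐ[μ] 0 := by
          filter_upwards [hmart] with ω hω
          simp [hω]
        have h3 : μ[X * g (m + 1)|ℱ m] =ᵐ[μ] 0 := h1.trans h2
        calc ∫ ω, X ω * g (m + 1) ω ∂μ = ∫ ω, (X * g (m + 1)) ω ∂μ := rfl
          _ = ∫ ω, (μ[X * g (m + 1)|ℱ m]) ω ∂μ := (integral_condExp hle).symm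
          _ = ∫ ω, (0 : Ω → ℝ) ω ∂μ := integral_congr_ae h3
          _ = 0 := by simp
      -- pointwise step bound
      have hstep : ∀ᵐ ω ∂μ, Real.exp (S (m + 1) ω) ≤
          Real.exp (S m ω) * A ω + L * (X ω * g (m + 1) ω) := by
        filter_upwards [hbdd] with ω hω
        have hsum : S (m + 1) ω = S m ω + f (m + 1) ω := by
          simp only [hS]
          exact Finset.sum_Icc_succ_top (by omega) _
        rw [hsum, Real.exp_add]
        have hEpos : 0 ≤ Real.exp (S m ω) := (Real.exp_pos _).le
        have h := step_ineq α (hw01' ω) (hω (m + 1) hmem)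
        have h' : Real.exp (f (m + 1) ω) ≤ A ω + w (m + 1) ω * L * g (m + 1) ω := by
          simpa [hf, hA, hK, hL, hc] using h
        calc Real.exp (S m ω) * Real.exp (f (m + 1) ω)
            ≤ Real.exp (S m ω) * (A ω + w (m + 1) ω * L * g (m + 1) ω) :=
              mul_le_mul_of_nonneg_left h' hEpos
          _ = Real.exp (S m ω) * A ω + L * (X ω * g (m + 1) ω) := by
              simp only [hX]; ring
      have hineq1 : ∫ ω, Real.exp (S (m + 1) ω) ∂μ ≤
          ∫ ω, (Real.exp (S m ω) * A ω + L * (X ω * g (m + 1) ω)) ∂μ := by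
        exact integral_mono_ae (hEint (m + 1) hm1) (hintEA.add (hintXg.const_mul L)) hstep
      have hineq2 : ∫ ω, (Real.exp (S m ω) * A ω + L * (X ω * g (m + 1) ω)) ∂μ =
          ∫ ω, Real.exp (S m ω) * A ω ∂μ := by
        rw [integral_add hintEA (hintXg.const_mul L), integral_const_mul, hXg0]
        ring
      have hineq3 : ∫ ω, Real.exp (S m ω) * A ω ∂μ ≤ ∫ ω, Real.exp (S m ω) ∂μ := by
        refine integral_mono_ae hintEA (hEint m hm) ?_
        filter_upwards with ω
        calc Real.exp (S m ω) * A ω ≤ Real.exp (S m ω) * 1 :=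
              mul_le_mul_of_nonneg_left (hAbd ω).2 (Real.exp_pos _).le
          _ = Real.exp (S m ω) := mul_one _
      calc ∫ ω, Real.exp (S (m + 1) ω) ∂μ
          ≤ ∫ ω, Real.exp (S m ω) * A ω ∂μ := hineq1.trans_eq hineq2
        _ ≤ ∫ ω, Real.exp (S m ω) ∂μ := hineq3
        _ ≤ 1 := ih hm
  -- Chernoff step
  set ε : ℝ := (i : ℝ) * α ^ 2 / 2 with hε
  have hsub : {ω | ∑ t ∈ Icc 1 n, w t ω = (i : ℝ)} ∩
      {ω | α * (i : ℝ) < ∑ t ∈ Icc 1 n, w t ω * g t ω} ⊆ {ω | ε ≤ S n ω} := by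
    rintro ω ⟨h1, h2⟩
    simp only [Set.mem_setOf_eq] at h1 h2 ⊢
    have hSeq : S n ω = α * (∑ t ∈ Icc 1 n, w t ω * g t ω) - c * (∑ t ∈ Icc 1 n, w t ω) := by
      simp only [hS, hf, Finset.mul_sum, Finset.sum_sub_distrib]
    rw [hSeq, h1]
    have : α * (α * (i : ℝ)) ≤ α * ∑ t ∈ Icc 1 n, w t ω * g t ω :=
      mul_le_mul_of_nonneg_left h2.le hα.le
    simp only [hε, hc]
    nlinarith
  have hmgf := ProbabilityTheory.measure_ge_le_exp_mul_mgf (X := S n) (μ := μ) (t := 1) ε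
    zero_le_one (by simpa using hEint n le_rfl)
  have hmgf1 : ProbabilityTheory.mgf (S n) μ 1 ≤ 1 := by
    have : ProbabilityTheory.mgf (S n) μ 1 = ∫ ω, Real.exp (S n ω) ∂μ := by
      simp [ProbabilityTheory.mgf]
    rw [this]; exact hkey n le_rfl
  have hfin : μ {ω | ε ≤ S n ω} ≠ ⊤ := measure_ne_top μ _
  have hfinal : μ {ω | ε ≤ S n ω} ≤ ENNReal.ofReal (Real.exp (-(i : ℝ) * α ^ 2 / 2)) := by
    rw [← ENNReal.ofReal_toReal hfin]
    apply ENNReal.ofReal_le_ofReal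
    calc (μ {ω | ε ≤ S n ω}).toReal ≤ Real.exp (-1 * ε) * ProbabilityTheory.mgf (S n) μ 1 := hmgf
      _ ≤ Real.exp (-1 * ε) * 1 := mul_le_mul_of_nonneg_left hmgf1 (Real.exp_pos _).le
      _ = Real.exp (-(i : ℝ) * α ^ 2 / 2) := by
          rw [mul_one]; congr 1; simp only [hε]; ring
  exact (measure_mono hsub).trans hfinal

/-- Weighted Azuma–Hoeffding-type inequality: for a bounded martingale difference
sequence `g` and a predictable `{0,1}`-valued weight sequence `w`, the weighted sum
concentrates on the event that exactly `i` weights are active. -/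
theorem weighted_azuma_fixed_count
    {Ω : Type*} [m0 : MeasurableSpace Ω] (μ : Measure Ω) [IsProbabilityMeasure μ]
    (ℱ : Filtration ℕ m0) (n : ℕ) (g w : ℕ → Ω → ℝ)
    (hgmeas : ∀ t ∈ Icc 1 n, Measurable[ℱ t] (g t))
    (hgbdd : ∀ t ∈ Icc 1 n, ∀ᵐ ω ∂μ, |g t ω| ≤ 1)
    (hgmart : ∀ t ∈ Icc 1 n, μ[g t|ℱ (t - 1)] =ᵐ[μ] 0)
    (hw01 : ∀ t ∈ Icc 1 n, ∀ ω, w t ω = 0 ∨ w t ω = 1)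
    (hwmeas : ∀ t ∈ Icc 1 n, Measurable[ℱ (t - 1)] (w t))
    (α : ℝ) (hα : 0 < α) (i : ℕ) (hi : 1 ≤ i) :
    μ ({ω | ∑ t ∈ Icc 1 n, w t ω = (i : ℝ)} ∩
       {ω | α * (i : ℝ) < |∑ t ∈ Icc 1 n, w t ω * g t ω|}) ≤
      ENNReal.ofReal (2 * Real.exp (-(i : ℝ) * α ^ 2 / 2)) := by
  have hpos := one_side μ ℱ n g w hgmeas hgbdd hgmart hw01 hwmeas α hα i
  have hneg := one_side μ ℱ n (fun t => -g t) w
    (fun t ht => (hgmeas t ht).neg)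
    (fun t ht => by filter_upwards [hgbdd t ht] with ω hω; simpa using hω)
    (fun t ht => by
      refine (condExp_neg (g t) _).trans ?_
      filter_upwards [hgmart t ht] with ω hω
      simp [hω])
    hw01 hwmeas α hα i
  set A := {ω | ∑ t ∈ Icc 1 n, w t ω = (i : ℝ)} with hA
  set T : Ω → ℝ := fun ω => ∑ t ∈ Icc 1 n, w t ω * g t ω with hT
  have hsplit : A ∩ {ω | α * (i : ℝ) < |T ω|} ⊆
      (A ∩ {ω | α * (i : ℝ) < T ω}) ∪
        (A ∩ {ω | α * (i : ℝ) < ∑ t ∈ Icc 1 n, w t ω * (fun t => -g t) t ω}) := by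
    rintro ω ⟨hωA, hωB⟩
    simp only [Set.mem_setOf_eq] at hωB
    rcases lt_abs.1 hωB with h | h
    · exact Or.inl ⟨hωA, h⟩
    · refine Or.inr ⟨hωA, ?_⟩
      simp only [Set.mem_setOf_eq]
      have : ∑ t ∈ Icc 1 n, w t ω * (-g t ω) = -T ω := by
        simp [hT, Finset.sum_neg_distrib, mul_neg]
      simpa [this] using h
  calc μ (A ∩ {ω | α * (i : ℝ) < |T ω|})
      ≤ μ ((A ∩ {ω | α * (i : ℝ) < T ω}) ∪
          (A ∩ {ω | α * (i : ℝ) < ∑ t ∈ Icc 1 n, w t ω * (fun t => -g t) t ω})) :=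
        measure_mono hsplit
    _ ≤ μ (A ∩ {ω | α * (i : ℝ) < T ω}) +
          μ (A ∩ {ω | α * (i : ℝ) < ∑ t ∈ Icc 1 n, w t ω * (fun t => -g t) t ω}) :=
        measure_union_le _ _
    _ ≤ ENNReal.ofReal (Real.exp (-(i : ℝ) * α ^ 2 / 2)) +
          ENNReal.ofReal (Real.exp (-(i : ℝ) * α ^ 2 / 2)) := add_le_add hpos hneg
    _ = ENNReal.ofReal (2 * Real.exp (-(i : ℝ) * α ^ 2 / 2)) := by
        rw [← ENNReal.ofReal_add (Real.exp_pos _).le (Real.exp_pos _).le]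
        congr 1; ring
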